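/- Let J and K be disjoint finite index sets, a : J ∪ K → ℝ, and b ∈ ℝ with b ∉ ℤ. Let f(t) := t − ⌊t⌋, so f(b) > 0. Then every x with x_j ∈ ℤ, x_j ≥ 0 for j ∈ J and x_k ∈ ℝ, x_k ≥ 0 for k ∈ K that satisfies Σ_{j∈J∪K} a_j x_j ≥ b also satisfies the mixed integer rounding (MIR) cut Σ_{k∈K, a_k>0} (a_k / f(b))·x_k + Σ_{j∈J} ( ⌊a_j⌋ + min(1, f(a_j)/f(b)) )·x_j ≥ ⌈b⌉. -/
import Mathlib

open Finset

/-- Basic mixed integer rounding: if `y` is an integer, `w ≥ 0` and `y + w ≥ b`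
with `b` not an integer, then `y + w / fract b ≥ ⌈b⌉`. -/
lemma basic_mir (b w : ℝ) (y : ℤ) (hbf : Int.fract b ≠ 0) (hw : 0 ≤ w)
    (h : b ≤ (y : ℝ) + w) : (⌈b⌉ : ℝ) ≤ (y : ℝ) + w / Int.fract b := by
  have hf0 : 0 < Int.fract b := lt_of_le_of_ne (Int.fract_nonneg b) (Ne.symm hbf)
  have hf1 : Int.fract b < 1 := Int.fract_lt_one b
  have hfl : (⌊b⌋ : ℝ) + Int.fract b = b := Int.floor_add_fract b
  have hceil : (⌈b⌉ : ℝ) ≤ (⌊b⌋ : ℝ) + 1 := by exact_mod_cast Int.ceil_le_floor_add_one b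
  by_cases hy : (⌈b⌉ : ℤ) ≤ y
  · have h1 : (⌈b⌉ : ℝ) ≤ (y : ℝ) := by exact_mod_cast hy
    have h2 : 0 ≤ w / Int.fract b := div_nonneg hw hf0.le
    linarith
  · push_neg at hy
    have hy' : y + 1 ≤ ⌈b⌉ := hy
    have hm : (y : ℝ) + 1 ≤ (⌈b⌉ : ℝ) := by exact_mod_cast hy'
    have hbceil : b ≤ (⌈b⌉ : ℝ) := Int.le_ceil b
    -- b ≥ ⌈b⌉ - 1 + fract b
    have hlow : (⌈b⌉ : ℝ) - 1 + Int.fract b ≤ b := by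
      have : (⌈b⌉ : ℝ) - 1 ≤ (⌊b⌋ : ℝ) := by linarith
      linarith
    have hkey : ((⌈b⌉ : ℝ) - y) * Int.fract b ≤ w := by nlinarith
    have := (le_div_iff₀ hf0).mpr hkey
    linarith

/-- Validity of the mixed integer rounding (MIR) cut for a single inequality over
nonnegative integer variables `J` and nonnegative continuous variables `K`. -/
theorem mir_cut_valid
    {ι : Type*} [DecidableEq ι] (J K : Finset ι) (hJK : Disjoint J K)
    (a : ι → ℝ) (b : ℝ) (hb : ¬ ∃ z : ℤ, (z : ℝ) = b)
    (x : ι → ℝ)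
    (hxJ : ∀ j ∈ J, ∃ z : ℤ, x j = (z : ℝ))
    (hxJ0 : ∀ j ∈ J, 0 ≤ x j)
    (hxK0 : ∀ k ∈ K, 0 ≤ x k)
    (hsat : ∑ j ∈ J ∪ K, a j * x j ≥ b) :
    ∑ k ∈ K.filter (fun k => 0 < a k), (a k / Int.fract b) * x k
      + ∑ j ∈ J, ((⌊a j⌋ : ℝ) + min 1 (Int.fract (a j) / Int.fract b)) * x j
      ≥ (⌈b⌉ : ℝ) := by
  classical
  set f := Int.fract b with hfdef
  have hbf : f ≠ 0 := by
    intro h0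
    exact hb ⟨⌊b⌋, by
      have h1 : (⌊b⌋ : ℝ) + Int.fract b = b := Int.floor_add_fract b
      rw [← hfdef, h0, add_zero] at h1
      exact h1⟩
  have hf0 : 0 < f := lt_of_le_of_ne (Int.fract_nonneg b) (Ne.symm hbf)
  -- integer values of x on J
  have hfl : ∀ j ∈ J, ((⌊x j⌋ : ℤ) : ℝ) = x j := by
    intro j hj
    obtain ⟨z, hz⟩ := hxJ j hj
    rw [hz, Int.floor_intCast]
  set p : ι → Prop := fun j => Int.fract (a j) ≤ f with hp
  set J1 := J.filter p with hJ1
  set J2 := J.filter (fun j => ¬ p j) with hJ2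
  have hJ1sub : J1 ⊆ J := filter_subset _ _
  have hJ2sub : J2 ⊆ J := filter_subset _ _
  set s := ∑ k ∈ K.filter (fun k => 0 < a k), a k * x k with hs
  have hs_ge : ∑ k ∈ K, a k * x k ≤ s := by
    rw [← Finset.sum_filter_add_sum_filter_not K (fun k => 0 < a k)]
    have h2 : ∑ k ∈ K.filter (fun k => ¬ 0 < a k), a k * x k ≤ 0 := by
      apply Finset.sum_nonpos
      intro k hk
      rw [mem_filter] at hk
      exact mul_nonpos_of_nonpos_of_nonneg (le_of_not_gt hk.2) (hxK0 k hk.1)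
    rw [← hs]
    linarith
  have hs0 : 0 ≤ s := by
    apply Finset.sum_nonneg
    intro k hk
    rw [mem_filter] at hk
    exact mul_nonneg hk.2.le (hxK0 k hk.1)
  set y : ℤ := ∑ j ∈ J1, ⌊a j⌋ * ⌊x j⌋ + ∑ j ∈ J2, (⌊a j⌋ + 1) * ⌊x j⌋ with hy
  have hycast : (y : ℝ) = ∑ j ∈ J1, (⌊a j⌋ : ℝ) * x j
      + ∑ j ∈ J2, ((⌊a j⌋ : ℝ) + 1) * x j := by
    rw [hy]
    push_cast
    congr 1
    · exact Finset.sum_congr rfl fun j hj => by rw [hfl j (hJ1sub hj)]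
    · exact Finset.sum_congr rfl fun j hj => by rw [hfl j (hJ2sub hj)]
  set t := ∑ j ∈ J1, Int.fract (a j) * x j with ht
  have ht0 : 0 ≤ t := by
    apply Finset.sum_nonneg
    intro j hj
    exact mul_nonneg (Int.fract_nonneg _) (hxJ0 j (hJ1sub hj))
  have hw : 0 ≤ s + t := by linarith
  -- the aggregated constraint
  have hyw : b ≤ (y : ℝ) + (s + t) := by
    have hsplit : ∑ j ∈ J, a j * x j = ∑ j ∈ J1, a j * x j + ∑ j ∈ J2, a j * x j := by
      rw [hJ1, hJ2, Finset.sum_filter_add_sum_filter_not]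
    have h1 : ∑ j ∈ J1, a j * x j = ∑ j ∈ J1, (⌊a j⌋ : ℝ) * x j + t := by
      rw [ht, ← Finset.sum_add_distrib]
      refine Finset.sum_congr rfl fun j hj => ?_
      simp only [Int.fract]
      ring
    have h2 : ∑ j ∈ J2, a j * x j ≤ ∑ j ∈ J2, ((⌊a j⌋ : ℝ) + 1) * x j := by
      apply Finset.sum_le_sum
      intro j hj
      exact mul_le_mul_of_nonneg_right (Int.lt_floor_add_one (a j)).le (hxJ0 j (hJ2sub hj))
    have hU : ∑ j ∈ J ∪ K, a j * x j = ∑ j ∈ J, a j * x j + ∑ k ∈ K, a k * x k :=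
      Finset.sum_union hJK
    rw [hycast]
    rw [hU] at hsat
    rw [hsplit, h1] at hsat
    linarith
  have key := basic_mir b (s + t) y hbf hw hyw
  -- rewrite the goal
  have hsK : ∑ k ∈ K.filter (fun k => 0 < a k), (a k / f) * x k = s / f := by
    rw [hs, Finset.sum_div]
    exact Finset.sum_congr rfl fun k _ => by ring
  have hJ1eq : ∑ j ∈ J1, ((⌊a j⌋ : ℝ) + min 1 (Int.fract (a j) / f)) * x j
      = ∑ j ∈ J1, (⌊a j⌋ : ℝ) * x j + t / f := by
    rw [ht, Finset.sum_div, ← Finset.sum_add_distrib]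
    refine Finset.sum_congr rfl fun j hj => ?_
    have hjp : Int.fract (a j) ≤ f := (mem_filter.mp hj).2
    rw [min_eq_right ((div_le_one hf0).mpr hjp)]
    ring
  have hJ2eq : ∑ j ∈ J2, ((⌊a j⌋ : ℝ) + min 1 (Int.fract (a j) / f)) * x j
      = ∑ j ∈ J2, ((⌊a j⌋ : ℝ) + 1) * x j := by
    refine Finset.sum_congr rfl fun j hj => ?_
    have hjp : ¬ Int.fract (a j) ≤ f := (mem_filter.mp hj).2
    push_neg at hjp
    rw [min_eq_left ((one_lt_div hf0).mpr hjp).le]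
  have hJsplit : ∑ j ∈ J, ((⌊a j⌋ : ℝ) + min 1 (Int.fract (a j) / f)) * x j
      = ∑ j ∈ J1, ((⌊a j⌋ : ℝ) + min 1 (Int.fract (a j) / f)) * x j
      + ∑ j ∈ J2, ((⌊a j⌋ : ℝ) + min 1 (Int.fract (a j) / f)) * x j := by
    rw [hJ1, hJ2, Finset.sum_filter_add_sum_filter_not]
  rw [ge_iff_le, hJsplit, hJ1eq, hJ2eq, hsK]
  rw [add_div] at key
  linarith
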